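/- For all integers n ≥ 0 and all real x ∈ [−1,1], the Legendre polynomial P_n satisfies (1−x²)^{1/4} |P_n(x)| ≤ 2/√(π(2n+1)). -/

import Mathlib

/-- The n-th Legendre polynomial via Rodrigues' formula. -/
noncomputable def legendreP (n : ℕ) (x : ℝ) : ℝ :=
  (1 / (2 ^ n * (n.factorial : ℝ))) * iteratedDeriv n (fun y : ℝ => (y ^ 2 - 1) ^ n) x

open Polynomial Real Filter Finset

theorem itd_add (k : ℕ) (p q : ℝ[X]) :
    derivative^[k] (p + q) = derivative^[k] p + derivative^[k] q := by
  induction k generalizing p q with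
  | zero => simp
  | succ k ih => simp [Function.iterate_succ_apply, derivative_add, ih]

theorem itd_Cmul (k : ℕ) (a : ℝ) (p : ℝ[X]) :
    derivative^[k] (C a * p) = C a * derivative^[k] p := by
  induction k generalizing p with
  | zero => simp
  | succ k ih => simp [Function.iterate_succ_apply, derivative_C_mul, ih]

theorem itD_X_mul (p : ℝ[X]) : ∀ k, derivative^[k+1] (X * p) =
    X * derivative^[k+1] p + (k+1 : ℝ[X]) * derivative^[k] p := by
  intro k
  induction k generalizing p with
  | zero => simp [derivative_mul]; ring
  | succ k ih =>
    rw [Function.iterate_succ_apply, derivative_mul, derivative_X, one_mul]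
    rw [show derivative^[k+1] (p + X * derivative p) = derivative^[k+1] p + derivative^[k+1] (X * derivative p) from itd_add _ _ _]
    rw [ih (derivative p)]
    rw [← Function.iterate_succ_apply, ← Function.iterate_succ_apply]
    push_cast
    ring

theorem itD_sq_mul (p : ℝ[X]) : ∀ k, derivative^[k+2] ((X^2 - 1) * p) =
    (X^2 - 1) * derivative^[k+2] p + (2*(k+2) : ℝ[X]) * (X * derivative^[k+1] p)
      + ((k+2)*(k+1) : ℝ[X]) * derivative^[k] p := by
  intro k
  induction k generalizing p with
  | zero =>
    simp only [Function.iterate_succ_apply, Function.iterate_zero_apply, Function.iterate_one]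
    simp [derivative_mul, derivative_pow, map_ofNat]
    ring
  | succ k ih =>
    rw [Function.iterate_succ_apply]
    have hd : derivative ((X^2-1) * p) = C 2 * (X * p) + (X^2-1) * derivative p := by
      simp [derivative_mul, derivative_pow, map_ofNat]; ring
    rw [hd, itd_add, itd_Cmul]
    rw [itD_X_mul p (k+1), ih (derivative p)]
    rw [← Function.iterate_succ_apply, ← Function.iterate_succ_apply, ← Function.iterate_succ_apply]
    push_cast [map_ofNat]
    ring

theorem legendre_ode (n : ℕ) :
    (1 - X^2) * derivative (derivative (derivative^[n] ((X^2-1)^n)))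
      - 2*X*derivative (derivative^[n] ((X^2-1)^n))
      + (n*(n+1) : ℝ[X]) * derivative^[n] ((X^2-1)^n) = 0 := by
  cases n with
  | zero => simp
  | succ N =>
    set n := N + 1 with hn
    have h1 : (X^2 - 1) * derivative ((X^2-1)^n) = C (2*(n:ℝ)) * (X * (X^2-1)^n) := by
      rw [hn, derivative_pow]
      simp only [Nat.add_sub_cancel, derivative_sub, derivative_one, derivative_X_pow,
        map_mul, map_ofNat, C_eq_natCast]
      rw [pow_succ]
      push_cast
      ring
    have h2 := congrArg (fun q => derivative^[N+2] q) h1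
    rw [itD_sq_mul (derivative ((X^2-1 : ℝ[X])^n)) N] at h2
    rw [itd_Cmul, itD_X_mul ((X^2-1)^n) (N+1)] at h2
    simp only [← Function.iterate_succ_apply] at h2
    have e2 : derivative (derivative^[n] ((X^2-1 : ℝ[X])^n)) = derivative^[n+1] ((X^2-1 : ℝ[X])^n) :=
      (Function.iterate_succ_apply' derivative n _).symm
    have e3 : derivative (derivative^[n+1] ((X^2-1 : ℝ[X])^n)) = derivative^[n+1+1] ((X^2-1 : ℝ[X])^n) :=
      (Function.iterate_succ_apply' derivative (n+1) _).symm
    rw [e2, e3]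
    simp only [Nat.succ_eq_add_one] at h2
    rw [show N + 2 + 1 = n + 1 + 1 from rfl, show N + 1 + 1 = n + 1 from rfl,
      show N + 1 = n from rfl] at h2
    simp only [map_mul, map_add, map_one, map_ofNat, C_eq_natCast] at h2
    push_cast at h2 ⊢
    have hn' : (n:ℝ[X]) = N+1 := by rw [hn]; push_cast; ring
    linear_combination -h2 + (-2*X*derivative^[n+1] ((X^2-1 : ℝ[X])^n) - (n+N+2)*derivative^[n] ((X^2-1 : ℝ[X])^n)) * hn'

theorem sq_sub_one_pow (n : ℕ) : (X^2-1:ℝ[X])^n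
    = ∑ k ∈ range (n+1), C ((-1)^(n-k) * (n.choose k : ℝ)) * X^(2*k) := by
  rw [sub_eq_add_neg, add_pow]
  refine Finset.sum_congr rfl fun k _ => ?_
  simp only [map_mul, map_pow, map_neg, map_one, C_eq_natCast, ← pow_mul]
  ring

theorem coeff_even (n t : ℕ) (h : t ≤ n) :
    ((X^2-1:ℝ[X])^n).coeff (2*t) = (-1)^(n-t) * (n.choose t : ℝ) := by
  rw [sq_sub_one_pow, finset_sum_coeff]
  rw [Finset.sum_eq_single t]
  · simp only [coeff_C_mul, coeff_X_pow]; simp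
  · intro k _ hk
    simp only [coeff_C_mul, coeff_X_pow, if_neg (by omega : ¬ 2*t = 2*k), mul_zero]
  · intro hc; exfalso; exact hc (Finset.mem_range.2 (by omega))

theorem coeff_odd (n t : ℕ) : ((X^2-1:ℝ[X])^n).coeff (2*t+1) = 0 := by
  rw [sq_sub_one_pow, finset_sum_coeff]
  refine Finset.sum_eq_zero fun k _ => ?_
  simp only [coeff_C_mul, coeff_X_pow, if_neg (by omega : ¬ 2*t+1 = 2*k), mul_zero]

theorem eval_zero_itd (p : ℝ[X]) (j : ℕ) :
    (derivative^[j] p).eval 0 = (j.factorial : ℝ) * p.coeff j := by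
  rw [← coeff_zero_eq_eval_zero, coeff_iterate_derivative]
  simp [Nat.descFactorial_self, nsmul_eq_mul]

theorem iteratedDeriv_polyeval (p : ℝ[X]) (k : ℕ) :
    iteratedDeriv k (fun y => p.eval y) = fun y => (derivative^[k] p).eval y := by
  induction k with
  | zero => simp
  | succ k ih =>
    rw [iteratedDeriv_succ, ih, Function.iterate_succ_apply']
    funext y
    exact Polynomial.deriv (p := derivative^[k] p) (x := y)

theorem legendreP_eq_eval (n : ℕ) (x : ℝ) :
    legendreP n x = (1/(2^n * (n.factorial : ℝ))) * (derivative^[n] ((X^2-1:ℝ[X])^n)).eval x := by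
  unfold legendreP
  congr 1
  have : (fun y : ℝ => (y^2-1)^n) = fun y => ((X^2-1:ℝ[X])^n).eval y := by
    funext y; simp
  rw [this, iteratedDeriv_polyeval]

noncomputable def cb (m : ℕ) : ℝ := ((2*m).choose m : ℝ) / 4^m

theorem cb_pos (m : ℕ) : 0 < cb m := by
  unfold cb
  apply div_pos
  · exact_mod_cast Nat.choose_pos (by omega)
  · positivity

theorem cb_succ (m : ℕ) : cb (m+1) = cb m * (2*m+1) / (2*m+2) := by
  have h1 : (2*m+1) * (2*m).choose m = (2*m+1).choose (m+1) * (m+1) := by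
    have := Nat.add_one_mul_choose_eq (2*m) m
    simpa [Nat.succ_eq_add_one] using this
  have h2 : (2*(m+1)).choose (m+1) = 2 * (2*m+1).choose (m+1) := by
    have hs : (2*m+1).choose m = (2*m+1).choose (m+1) := by
      have := Nat.choose_symm (n := 2*m+1) (k := m+1) (by omega)
      simpa [show 2*m+1-(m+1) = m by omega] using this
    have : (2*(m+1)).choose (m+1) = (2*m+1).choose m + (2*m+1).choose (m+1) := by
      have := Nat.choose_succ_succ (2*m+1) m
      simpa [show 2*(m+1) = (2*m+1)+1 by ring] using this
    omega
  have h1' : (2*(m:ℝ)+1) * ((2*m).choose m : ℝ) = ((2*m+1).choose (m+1) : ℝ) * (m+1) := by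
    exact_mod_cast h1
  unfold cb
  rw [h2]
  have hm1 : ((m:ℝ)+1) ≠ 0 := by positivity
  push_cast
  field_simp
  linear_combination (-4 * (4:ℝ)^m) * h1'

theorem cb_sq_W (m : ℕ) : cb m ^ 2 * (2*m+1) = (Real.Wallis.W m)⁻¹ := by
  induction m with
  | zero => unfold cb Real.Wallis.W; norm_num
  | succ m ih =>
    rw [Real.Wallis.W_succ, cb_succ]
    have hW := Real.Wallis.W_pos m
    have h1 : (2*(m:ℝ)+1) ≠ 0 := by positivity
    have h2 : (2*(m:ℝ)+2) ≠ 0 := by positivity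
    have h3 : (2*(m:ℝ)+3) ≠ 0 := by positivity
    rw [mul_inv]
    rw [← ih]
    have hcb := cb_pos m
    push_cast
    field_simp
    ring

theorem tendsto_cb_sq : Tendsto (fun m : ℕ => cb m ^ 2 * (2*m+1)) atTop (nhds (2/π)) := by
  have h : Tendsto (fun m : ℕ => (Real.Wallis.W m)⁻¹) atTop (nhds (π/2)⁻¹) :=
    (Real.Wallis.tendsto_W_nhds_pi_div_two).inv₀ (by positivity)
  have : (π/2)⁻¹ = 2/π := by rw [inv_div]
  rw [this] at h
  exact h.congr fun m => (cb_sq_W m).symm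

theorem tendsto_half_sub (f : ℕ → ℝ) (hf0 : ∀ m, 0 ≤ f m) (hf1 : ∀ m, f m ≤ 1/(m+1)) :
    Tendsto (fun m : ℕ => 1/2 - f m) atTop (nhds (1/2)) := by
  have hz : Tendsto f atTop (nhds 0) := by
    apply tendsto_of_tendsto_of_tendsto_of_le_of_le tendsto_const_nhds
      tendsto_one_div_add_atTop_nhds_zero_nat hf0 hf1
  simpa using (tendsto_const_nhds (x := (1/2:ℝ)) (f := atTop)).sub hz

theorem cb_even_bound (m : ℕ) : cb m ^ 2 * (m + 1/4) ≤ 1/π := by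
  set A : ℕ → ℝ := fun m => cb m ^ 2 * (m + 1/4) with hA
  have hmono : Monotone A := by
    apply monotone_nat_of_le_succ
    intro k
    have h2 : (2*(k:ℝ)+2) ≠ 0 := by positivity
    have hcb := cb_pos k
    simp only [hA, cb_succ]
    rw [div_pow, div_mul_eq_mul_div, le_div_iff₀ (by positivity)]
    push_cast
    nlinarith [sq_nonneg (cb k), cb_pos k, Nat.cast_nonneg (α := ℝ) k]
  have hlim : Tendsto A atTop (nhds (1/π)) := by
    have heq : ∀ m : ℕ, A m = (cb m ^ 2 * (2*m+1)) * (1/2 - (1/4)/(2*m+1)) := by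
      intro m
      have h1 : (2*(m:ℝ)+1) ≠ 0 := by positivity
      simp only [hA]
      field_simp
      ring
    have hl2 : Tendsto (fun m : ℕ => 1/2 - (1/4)/(2*(m:ℝ)+1)) atTop (nhds (1/2)) := by
      apply tendsto_half_sub
      · intro m; positivity
      · intro m
        rw [div_le_div_iff₀ (by positivity) (by positivity)]
        nlinarith [Nat.cast_nonneg (α := ℝ) m]
    have := tendsto_cb_sq.mul hl2
    rw [show (2/π) * (1/2) = 1/π by ring] at this
    exact this.congr fun m => (heq m).symm
  exact hmono.ge_of_tendsto hlim _

theorem cb_odd_bound (m : ℕ) :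
    cb m ^ 2 * ((4*m+3) * (2*m+1)^2 / ((4*m+3)^2+1)) ≤ 1/π := by
  set B : ℕ → ℝ := fun m => cb m ^ 2 * ((4*m+3) * (2*m+1)^2 / ((4*m+3)^2+1)) with hB
  have hmono : Monotone B := by
    apply monotone_nat_of_le_succ
    intro k
    have h2 : (2*(k:ℝ)+2) ≠ 0 := by positivity
    have hcb := cb_pos k
    have e1 : B k = (cb k^2 * ((4*k+3)*(2*k+1)^2)) / ((4*k+3)^2+1) := by
      simp only [hB]; ring
    have e2 : B (k+1) = (cb k^2 * ((2*k+1)^2*((4*k+7)*(2*k+3)^2))) / ((2*k+2)^2 * ((4*k+7)^2+1)) := by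
      simp only [hB, cb_succ]
      push_cast
      field_simp
      ring
    rw [e1, e2, div_le_div_iff₀ (by positivity) (by positivity)]
    nlinarith [sq_nonneg (cb k), cb_pos k, Nat.cast_nonneg (α := ℝ) k, sq_nonneg ((k:ℝ)+1), sq_nonneg (cb k * ((k:ℝ)+1))]
  have hlim : Tendsto B atTop (nhds (1/π)) := by
    have heq : ∀ m : ℕ, B m = (cb m ^ 2 * (2*m+1)) * (1/2 - (2*m+2)/((4*m+3)^2+1)) := by
      intro m
      have h1 : (2*(m:ℝ)+1) ≠ 0 := by positivity
      have h2 : ((4*(m:ℝ)+3)^2+1) ≠ 0 := by positivity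
      simp only [hB]
      field_simp
      ring
    have hl2 : Tendsto (fun m : ℕ => 1/2 - (2*(m:ℝ)+2)/((4*m+3)^2+1)) atTop (nhds (1/2)) := by
      apply tendsto_half_sub
      · intro m; positivity
      · intro m
        rw [div_le_div_iff₀ (by positivity) (by positivity)]
        nlinarith [Nat.cast_nonneg (α := ℝ) m, sq_nonneg ((m:ℝ))]
    have := tendsto_cb_sq.mul hl2
    rw [show (2/π) * (1/2) = 1/π by ring] at this
    exact this.congr fun m => (heq m).symm
  exact hmono.ge_of_tendsto hlim _

theorem hasDerivAt_sqrt_sin {θ : ℝ} (hs : 0 < Real.sin θ) :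
    HasDerivAt (fun t => Real.sqrt (Real.sin t)) (Real.cos θ / (2 * Real.sqrt (Real.sin θ))) θ := by
  have h := (Real.hasDerivAt_sqrt hs.ne').comp θ (Real.hasDerivAt_sin θ)
  rw [show Real.cos θ / (2*Real.sqrt (Real.sin θ)) = 1/(2*Real.sqrt (Real.sin θ)) * Real.cos θ by ring]
  simpa [Function.comp_def] using h

theorem hasDerivAt_evalcos (p : ℝ[X]) (θ : ℝ) :
    HasDerivAt (fun t => p.eval (Real.cos t)) (-Real.sin θ * p.derivative.eval (Real.cos θ)) θ := by
  have h := (p.hasDerivAt (Real.cos θ)).comp θ (Real.hasDerivAt_cos θ)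
  simpa [Function.comp_def, mul_comm] using h

noncomputable def uu (Q : ℝ[X]) (θ : ℝ) : ℝ := Real.sqrt (Real.sin θ) * Q.eval (Real.cos θ)

noncomputable def vv (Q : ℝ[X]) (θ : ℝ) : ℝ :=
  Real.cos θ/(2*Real.sqrt (Real.sin θ)) * Q.eval (Real.cos θ)
    - Real.sqrt (Real.sin θ) * Real.sin θ * (derivative Q).eval (Real.cos θ)

noncomputable def ff (n : ℕ) (θ : ℝ) : ℝ := ((n:ℝ)*(n+1) + 1/4) + 1/(4*Real.sin θ^2)

noncomputable def EE (n : ℕ) (Q : ℝ[X]) (θ : ℝ) : ℝ := uu Q θ^2 + vv Q θ^2 / ff n θ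

theorem ff_pos (n : ℕ) {θ : ℝ} (hs : 0 < Real.sin θ) : 0 < ff n θ := by
  unfold ff; positivity

theorem hasDerivAt_uu (Q : ℝ[X]) {θ : ℝ} (hs : 0 < Real.sin θ) :
    HasDerivAt (uu Q) (vv Q θ) θ := by
  have h := (hasDerivAt_sqrt_sin hs).mul (hasDerivAt_evalcos Q θ)
  have hr : Real.sqrt (Real.sin θ) ≠ 0 := by positivity
  refine h.congr_deriv ?_
  symm
  unfold vv
  field_simp
  ring

theorem hasDerivAt_ff (n : ℕ) {θ : ℝ} (hs : 0 < Real.sin θ) :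
    HasDerivAt (ff n) (-(Real.cos θ)/(2*Real.sin θ^3)) θ := by
  have h1 : HasDerivAt (fun t => 4*Real.sin t^2) (8 * Real.sin θ * Real.cos θ) θ := by
    have := ((Real.hasDerivAt_sin θ).pow 2).const_mul (4:ℝ)
    refine this.congr_deriv ?_
    symm
    ring
  have h2 : (4*Real.sin θ^2) ≠ 0 := by positivity
  have h := (h1.inv h2).const_add ((n:ℝ)*(n+1) + 1/4)
  have heq : ff n = fun t => ((n:ℝ)*(n+1) + 1/4) + (4*Real.sin t^2)⁻¹ := by
    funext t; unfold ff; norm_num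
  rw [heq]
  refine h.congr_deriv ?_
  symm
  rw [div_eq_div_iff (by positivity) (by positivity)]
  field_simp
  ring

theorem hasDerivAt_vv (n : ℕ) (Q : ℝ[X]) {θ : ℝ} (hs : 0 < Real.sin θ)
    (hode : ∀ x : ℝ, (1-x^2) * (derivative (derivative Q)).eval x
      = 2*x*(derivative Q).eval x - (n:ℝ)*(n+1)*Q.eval x) :
    HasDerivAt (vv Q) (-(ff n θ) * uu Q θ) θ := by
  have hr : (0:ℝ) < Real.sqrt (Real.sin θ) := Real.sqrt_pos.2 hs
  have h2r : (2*Real.sqrt (Real.sin θ)) ≠ 0 := by positivity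
  have hA := ((Real.hasDerivAt_cos θ).div ((hasDerivAt_sqrt_sin hs).const_mul 2) h2r).mul
    (hasDerivAt_evalcos Q θ)
  have hB := (((hasDerivAt_sqrt_sin hs).mul (Real.hasDerivAt_sin θ)).mul
    (hasDerivAt_evalcos (derivative Q) θ))
  have h := hA.sub hB
  refine h.congr_deriv ?_
  symm
  simp only [Pi.mul_apply, Pi.div_apply]
  unfold ff uu
  set r := Real.sqrt (Real.sin θ) with hrdef
  set c' := Real.cos θ with hcdef
  set F := Q.eval c' with hFdef
  set F1 := (derivative Q).eval c' with hF1def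
  set F2 := (derivative (derivative Q)).eval c' with hF2def
  have hr2 : r^2 = Real.sin θ := Real.sq_sqrt hs.le
  have hpy4 : r^4 = 1 - c'^2 := by
    rw [show r^4 = (r^2)^2 by ring, hr2, hcdef]
    rw [Real.sin_sq_eq_half_sub]
    rw [Real.cos_sq]
    ring
  have hodeR : r^4 * F2 = 2*c'*F1 - (n:ℝ)*(n+1)*F := by rw [hpy4]; exact hode c'
  rw [← hr2]
  field_simp
  ring_nf
  linear_combination (norm := ring_nf) (-16*r^4) * hodeR + (4*F) * hpy4

theorem hasDerivAt_EE (n : ℕ) (Q : ℝ[X]) {θ : ℝ} (hs : 0 < Real.sin θ)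
    (hode : ∀ x : ℝ, (1-x^2) * (derivative (derivative Q)).eval x
      = 2*x*(derivative Q).eval x - (n:ℝ)*(n+1)*Q.eval x) :
    HasDerivAt (EE n Q) (vv Q θ^2 * (Real.cos θ/(2*Real.sin θ^3)) / ff n θ^2) θ := by
  have hu := hasDerivAt_uu Q hs
  have hv := hasDerivAt_vv n Q hs hode
  have hf := hasDerivAt_ff n hs
  have hfp := ff_pos n hs
  have hE := (hu.pow 2).add ((hv.pow 2).div hf hfp.ne')
  refine hE.congr_deriv ?_
  symm
  simp only [Pi.pow_apply]
  field_simp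
  ring

theorem EE_le_mid (n : ℕ) (Q : ℝ[X])
    (hode : ∀ x : ℝ, (1-x^2) * (derivative (derivative Q)).eval x
      = 2*x*(derivative Q).eval x - (n:ℝ)*(n+1)*Q.eval x)
    {θ : ℝ} (hθ : θ ∈ Set.Ioo 0 π) : EE n Q θ ≤ EE n Q (π/2) := by
  have hsin : ∀ t ∈ Set.Ioo (0:ℝ) π, 0 < Real.sin t := fun t ht =>
    Real.sin_pos_of_pos_of_lt_pi ht.1 ht.2
  rcases le_or_gt θ (π/2) with hle | hlt
  · have hsub : Set.Icc θ (π/2) ⊆ Set.Ioo 0 π := by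
      intro t ht
      constructor
      · linarith [ht.1, hθ.1]
      · linarith [ht.2, Real.pi_pos]
    have hmono : MonotoneOn (EE n Q) (Set.Icc θ (π/2)) := by
      apply monotoneOn_of_deriv_nonneg (convex_Icc _ _)
      · intro t ht
        exact (hasDerivAt_EE n Q (hsin t (hsub ht)) hode).continuousAt.continuousWithinAt
      · intro t ht
        rw [interior_Icc] at ht
        exact (hasDerivAt_EE n Q (hsin t (hsub (Set.Ioo_subset_Icc_self ht))) hode).differentiableAt.differentiableWithinAt
      · intro t ht
        rw [interior_Icc] at ht
        have hts := hsin t (hsub (Set.Ioo_subset_Icc_self ht))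
        rw [(hasDerivAt_EE n Q hts hode).deriv]
        have hcos : 0 ≤ Real.cos t := Real.cos_nonneg_of_mem_Icc ⟨by linarith [ht.1, hθ.1], ht.2.le⟩
        have := ff_pos n hts
        positivity
    exact hmono ⟨le_refl θ, hle⟩ ⟨hle, le_refl _⟩ hle
  · have hsub : Set.Icc (π/2) θ ⊆ Set.Ioo 0 π := by
      intro t ht
      constructor
      · linarith [ht.1, Real.pi_pos]
      · linarith [ht.2, hθ.2]
    have hanti : AntitoneOn (EE n Q) (Set.Icc (π/2) θ) := by
      apply antitoneOn_of_deriv_nonpos (convex_Icc _ _)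
      · intro t ht
        exact (hasDerivAt_EE n Q (hsin t (hsub ht)) hode).continuousAt.continuousWithinAt
      · intro t ht
        rw [interior_Icc] at ht
        exact (hasDerivAt_EE n Q (hsin t (hsub (Set.Ioo_subset_Icc_self ht))) hode).differentiableAt.differentiableWithinAt
      · intro t ht
        rw [interior_Icc] at ht
        have hts := hsin t (hsub (Set.Ioo_subset_Icc_self ht))
        rw [(hasDerivAt_EE n Q hts hode).deriv]
        have hcos : Real.cos t ≤ 0 := by
          apply Real.cos_nonpos_of_pi_div_two_le_of_le ht.1.le
          linarith [ht.2, hθ.2, Real.pi_pos]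
        have hffp := ff_pos n hts
        have hs3 : 0 < Real.sin t^3 := by positivity
        apply div_nonpos_of_nonpos_of_nonneg
        · apply mul_nonpos_of_nonneg_of_nonpos (sq_nonneg _)
          apply div_nonpos_of_nonpos_of_nonneg hcos (by positivity)
        · positivity
    exact hanti ⟨le_refl _, hlt.le⟩ ⟨hlt.le, le_refl θ⟩ hlt.le

theorem uu_sq_le_EE (n : ℕ) (Q : ℝ[X]) {θ : ℝ} (hs : 0 < Real.sin θ) :
    uu Q θ^2 ≤ EE n Q θ := by
  unfold EE
  have := ff_pos n hs
  nlinarith [sq_nonneg (vv Q θ), div_nonneg (sq_nonneg (vv Q θ)) this.le]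

theorem EE_mid (n : ℕ) (Q : ℝ[X]) :
    EE n Q (π/2) = (Q.eval 0)^2 + ((derivative Q).eval 0)^2 / ((n:ℝ)*(n+1) + 1/2) := by
  unfold EE uu vv ff
  rw [Real.sin_pi_div_two, Real.cos_pi_div_two, Real.sqrt_one]
  norm_num
  rw [show (n:ℝ)*(n+1) + 1/4 + 1/4 = (n:ℝ)*(n+1) + 1/2 by ring]

noncomputable def Qn (n : ℕ) : ℝ[X] :=
  C (1/(2^n * (n.factorial:ℝ))) * derivative^[n] ((X^2-1:ℝ[X])^n)

theorem legendreP_eq_Qn (n : ℕ) (x : ℝ) : legendreP n x = (Qn n).eval x := by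
  rw [legendreP_eq_eval]; unfold Qn; simp [eval_mul]

theorem ode_Qn (n : ℕ) : ∀ x : ℝ, (1-x^2) * (derivative (derivative (Qn n))).eval x
    = 2*x*(derivative (Qn n)).eval x - (n:ℝ)*(n+1)*(Qn n).eval x := by
  intro x
  have h := congrArg (Polynomial.eval x) (legendre_ode n)
  simp only [eval_add, eval_sub, eval_mul, eval_one, eval_pow, eval_X, eval_zero,
    eval_natCast, eval_ofNat, Polynomial.eval_natCast] at h
  unfold Qn
  simp only [derivative_C_mul, eval_mul, eval_C]
  push_cast at h ⊢
  linear_combination (1/(2^n * (n.factorial:ℝ))) * h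

theorem dQn_eval (n : ℕ) : (derivative (Qn n)).eval 0
    = (1/(2^n * (n.factorial:ℝ))) * ((n+1).factorial : ℝ) * ((X^2-1:ℝ[X])^n).coeff (n+1) := by
  unfold Qn
  rw [derivative_C_mul, eval_mul, eval_C]
  rw [show derivative (derivative^[n] ((X^2-1:ℝ[X])^n)) = derivative^[n+1] ((X^2-1:ℝ[X])^n) from
    (Function.iterate_succ_apply' derivative n _).symm]
  rw [eval_zero_itd]
  ring

theorem Qn_eval (n : ℕ) : (Qn n).eval 0
    = (1/(2^n * (n.factorial:ℝ))) * (n.factorial : ℝ) * ((X^2-1:ℝ[X])^n).coeff n := by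
  unfold Qn
  rw [eval_mul, eval_C, eval_zero_itd]
  ring

theorem EE_mid_le (n : ℕ) : EE n (Qn n) (π/2) ≤ 4/(π*(2*n+1)) := by
  have hπ := Real.pi_pos
  obtain ⟨m, rfl | rfl⟩ := Nat.even_or_odd' n
  · -- even n = 2m
    have h0 : (Qn (2*m)).eval 0 = (-1)^m * cb m := by
      rw [Qn_eval, coeff_even (2*m) m (by omega), show 2*m - m = m by omega]
      have hfac : ((2*m).factorial : ℝ) ≠ 0 := by positivity
      unfold cb
      rw [show (2:ℝ)^(2*m) = 4^m by rw [pow_mul]; norm_num]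
      field_simp
    have h1 : (derivative (Qn (2*m))).eval 0 = 0 := by
      rw [dQn_eval, coeff_odd (2*m) m]; ring
    rw [EE_mid, h0, h1]
    have hb := cb_even_bound m
    have h2 : π * (cb m^2*(m+1/4)) ≤ π * (1/π) := mul_le_mul_of_nonneg_left hb hπ.le
    rw [mul_one_div, div_self hπ.ne'] at h2
    rw [show ((-1:ℝ)^m * cb m)^2 = cb m^2 by rw [mul_pow, ← pow_mul, mul_comm m 2, pow_mul]; norm_num]
    norm_num
    rw [le_div_iff₀ (by positivity)]
    push_cast
    nlinarith [h2]
  · -- odd n = 2m+1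
    have h0 : (Qn (2*m+1)).eval 0 = 0 := by
      rw [Qn_eval, coeff_odd (2*m+1) m]; ring
    have hkey : (2*m+1) * (2*m).choose m = (2*m+1).choose (m+1) * (m+1) := by
      have := Nat.add_one_mul_choose_eq (2*m) m
      simpa [Nat.succ_eq_add_one] using this
    have hkey' : (2*(m:ℝ)+1) * ((2*m).choose m : ℝ) = ((2*m+1).choose (m+1) : ℝ) * (m+1) := by
      exact_mod_cast hkey
    have hfacs : ((2*(m+1)).factorial : ℝ) = (2*m+2) * ((2*m+1).factorial : ℝ) := by
      rw [show 2*(m+1) = (2*m+1)+1 by ring, Nat.factorial_succ]; push_cast; ring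
    have hfac : ((2*m+1).factorial : ℝ) ≠ 0 := by positivity
    have h1' : (derivative (Qn (2*m+1))).eval 0 = (-1)^m * ((2*(m:ℝ)+1) * cb m) := by
      rw [dQn_eval]
      rw [show (2*m+1)+1 = 2*(m+1) by ring, coeff_even (2*m+1) (m+1) (by omega),
        show 2*m+1-(m+1) = m by omega]
      unfold cb
      rw [hfacs]
      rw [show (2:ℝ)^(2*m+1) = 2 * 4^m by rw [pow_succ, pow_mul]; norm_num; ring]
      field_simp
      linear_combination (norm := ring_nf) -hkey'
    have h1 : ((derivative (Qn (2*m+1))).eval 0)^2 = (2*m+1)^2 * cb m^2 := by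
      rw [h1', mul_pow, show ((-1:ℝ)^m)^2 = 1 by rw [← pow_mul, mul_comm m 2, pow_mul]; norm_num,
        one_mul, mul_pow]
    rw [EE_mid, h0, h1]
    have hb := cb_odd_bound m
    have h2 : π * (cb m ^ 2 * ((4*m+3) * (2*m+1)^2 / ((4*m+3)^2+1))) ≤ π * (1/π) :=
      mul_le_mul_of_nonneg_left hb hπ.le
    rw [mul_one_div, div_self hπ.ne'] at h2
    have hD : ((2*m+1:ℕ):ℝ)*((2*m+1:ℕ)+1) + 1/2 = ((4*m+3)^2+1)/4 := by push_cast; ring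
    norm_num
    rw [div_le_div_iff₀ (by positivity) (by positivity)]
    have hDpos : (0:ℝ) < (4*(m:ℝ)+3)^2+1 := by positivity
    have h3 : π * (cb m^2 * ((4*(m:ℝ)+3) * (2*m+1)^2)) ≤ (4*(m:ℝ)+3)^2+1 := by
      have h4 := mul_le_mul_of_nonneg_right h2 hDpos.le
      rw [one_mul] at h4
      calc π * (cb m^2 * ((4*(m:ℝ)+3) * (2*m+1)^2))
          = π * (cb m ^ 2 * ((4*m+3) * (2*m+1)^2 / ((4*m+3)^2+1))) * ((4*(m:ℝ)+3)^2+1) := by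
            field_simp
        _ ≤ (4*(m:ℝ)+3)^2+1 := h4
    push_cast
    nlinarith [h3]

theorem bernstein_legendre (n : ℕ) (x : ℝ) (hx : x ∈ Set.Icc (-1 : ℝ) 1) :
    (1 - x ^ 2) ^ ((1 : ℝ) / 4) * |legendreP n x| ≤
      2 / Real.sqrt (Real.pi * (2 * n + 1)) := by
  obtain ⟨hx1, hx2⟩ := hx
  have hπ := Real.pi_pos
  have hargpos : (0:ℝ) < π * (2*n+1) := by positivity
  have hRpos : (0:ℝ) < 2 / Real.sqrt (π*(2*n+1)) := by positivity
  by_cases hedge : x = 1 ∨ x = -1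
  · have hzero : 1 - x^2 = 0 := by rcases hedge with h | h <;> rw [h] <;> ring
    rw [hzero, Real.zero_rpow (by norm_num), zero_mul]
    exact hRpos.le
  · push_neg at hedge
    have hx1' : -1 < x := lt_of_le_of_ne hx1 (Ne.symm hedge.2)
    have hx2' : x < 1 := lt_of_le_of_ne hx2 hedge.1
    have h1x : (0:ℝ) < 1 - x^2 := by nlinarith
    set θ := Real.arccos x with hθdef
    have hθIoo : θ ∈ Set.Ioo 0 π := by
      constructor
      · exact Real.arccos_pos.2 hx2'
      · rw [hθdef, Real.arccos_eq_pi_div_two_sub_arcsin]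
        have := Real.neg_pi_div_two_lt_arcsin.2 hx1'
        linarith
    have hsinpos : 0 < Real.sin θ := Real.sin_pos_of_pos_of_lt_pi hθIoo.1 hθIoo.2
    have hcos : Real.cos θ = x := Real.cos_arccos hx1 hx2
    have hsin : Real.sin θ = Real.sqrt (1 - x^2) := Real.sin_arccos x
    have hchain : uu (Qn n) θ^2 ≤ 4/(π*(2*n+1)) :=
      ((uu_sq_le_EE n (Qn n) hsinpos).trans (EE_le_mid n (Qn n) (ode_Qn n) hθIoo)).trans
        (EE_mid_le n)
    have huu : uu (Qn n) θ^2 = Real.sqrt (1-x^2) * (legendreP n x)^2 := by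
      unfold uu
      rw [hcos, hsin, mul_pow, Real.sq_sqrt (Real.sqrt_nonneg _), legendreP_eq_Qn]
    have hLsq : ((1 - x^2) ^ ((1:ℝ)/4) * |legendreP n x|)^2
        = Real.sqrt (1-x^2) * (legendreP n x)^2 := by
      rw [mul_pow, sq_abs]
      congr 1
      rw [← Real.rpow_natCast ((1-x^2)^((1:ℝ)/4)) 2, ← Real.rpow_mul h1x.le,
        Real.sqrt_eq_rpow]
      norm_num
    have hRsq : (2 / Real.sqrt (π*(2*n+1)))^2 = 4/(π*(2*n+1)) := by
      rw [div_pow, Real.sq_sqrt hargpos.le]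
      norm_num
    have hLnonneg : 0 ≤ (1 - x^2) ^ ((1:ℝ)/4) * |legendreP n x| := by positivity
    rw [← Real.sqrt_sq hLnonneg, ← Real.sqrt_sq hRpos.le]
    apply Real.sqrt_le_sqrt
    rw [hLsq, hRsq, ← huu]
    exact hchain
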